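/- Let $C = (C_{\bullet,\bullet}, \bar{d}, \bar{s}, \bar{t}, d, s, t)$ be a bi-paracyclic $k$-module. Then the diagonal $\mathrm{Diag}_m(C) = C_{m,m}$ with operators $(\bar{d}d, \bar{s}s, \bar{t}t)$ is a paracyclic $k$-module. If moreover $C$ is a cylindrical module, i.e., $\bar{t}^{p+1}t^{q+1} = 1$ on $C_{p,q}$, then $\mathrm{Diag}(C)$ is a cyclic $k$-module: $(\bar{t}t)^{m+1} = 1$ on $C_{m,m}$. -/

import Mathlib

/-!
Statement 11: The diagonal of a bi-paracyclic `k`-module `C` (with operators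
`(d̄, s̄, t̄)` on rows and `(d, s, t)` on columns, each row and column paracyclic and
horizontal operators commuting with vertical ones) is a paracyclic `k`-module with
operators `(d̄d, s̄s, t̄t)`.  If moreover `C` is cylindrical, i.e. `t̄^{p+1} t^{q+1} = 1`
on `C_{p,q}`, then the diagonal is a cyclic `k`-module: `(t̄t)^{m+1} = 1` on `C_{m,m}`.
-/

noncomputable section

variable (k : Type) [CommRing k]

/-- The data of a paracyclic module. -/
structure ParacyclicData (C : ℕ → Type) [∀ n, AddCommGroup (C n)] [∀ n, Module k (C n)] where
  d : ∀ n, C (n + 1) →ₗ[k] C n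
  s : ∀ n, C n →ₗ[k] C (n + 1)
  t : ∀ n, C n ≃ₗ[k] C n

variable {k} {C : ℕ → Type} [∀ n, AddCommGroup (C n)] [∀ n, Module k (C n)]

/-- The face maps `d_j = t^j ∘ d ∘ t^{-(j+1)}`. -/
def ParacyclicData.face (P : ParacyclicData k C) (n j : ℕ) : C (n + 1) →ₗ[k] C n :=
  (↑(P.t n ^ j) : C n →ₗ[k] C n) ∘ₗ P.d n ∘ₗ
    (↑((P.t (n + 1))⁻¹ ^ (j + 1)) : C (n + 1) →ₗ[k] C (n + 1))

/-- The degeneracy maps `s_j = t^{j+1} ∘ s ∘ t^{-(j+1)}`. -/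
def ParacyclicData.deg (P : ParacyclicData k C) (n j : ℕ) : C n →ₗ[k] C (n + 1) :=
  (↑(P.t (n + 1) ^ (j + 1)) : C (n + 1) →ₗ[k] C (n + 1)) ∘ₗ P.s n ∘ₗ
    (↑((P.t n)⁻¹ ^ (j + 1)) : C n →ₗ[k] C n)

/-- The paracyclic module axioms. -/
structure IsParacyclic (P : ParacyclicData k C) : Prop where
  t_eq : ∀ n, (↑(P.t n) : C n →ₗ[k] C n) = (P.d n) ∘ₗ (P.s n)
  face_face : ∀ n i j, i < j → j ≤ n + 2 →
    (P.face n i) ∘ₗ (P.face (n + 1) j) = (P.face n (j - 1)) ∘ₗ (P.face (n + 1) i)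
  deg_deg : ∀ n i j, i ≤ j → j ≤ n →
    (P.deg (n + 1) i) ∘ₗ (P.deg n j) = (P.deg (n + 1) (j + 1)) ∘ₗ (P.deg n i)
  face_deg_lt : ∀ n i j, i < j → j ≤ n + 1 →
    (P.face (n + 1) i) ∘ₗ (P.deg (n + 1) j) = (P.deg n (j - 1)) ∘ₗ (P.face n i)
  face_deg_eq : ∀ n j, j ≤ n →
    (P.face n j) ∘ₗ (P.deg n j) = LinearMap.id ∧ (P.face n (j + 1)) ∘ₗ (P.deg n j) = LinearMap.id
  face_deg_gt : ∀ n i j, j + 1 < i → i ≤ n + 2 →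
    (P.face (n + 1) i) ∘ₗ (P.deg (n + 1) j) = (P.deg n j) ∘ₗ (P.face n (i - 1))


section AuxHelpers

variable {M N : Type} [AddCommGroup M] [Module k M] [AddCommGroup N] [Module k N]

theorem aux_comm_pow (f : M →ₗ[k] N) (e : M ≃ₗ[k] M) (e' : N ≃ₗ[k] N)
    (h : ∀ x, f (e x) = e' (f x)) : ∀ (n : ℕ) (x : M), f ((e ^ n) x) = (e' ^ n) (f x) := by
  intro n
  induction n with
  | zero => intro x; simp
  | succ n ih =>
    intro x
    have h1 : (e ^ (n + 1)) x = (e ^ n) (e x) := by rw [pow_succ]; rfl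
    have h2 : (e' ^ (n + 1)) (f x) = (e' ^ n) (e' (f x)) := by rw [pow_succ]; rfl
    rw [h1, h2, ih (e x), h]

theorem aux_comm_inv (f : M →ₗ[k] N) (e : M ≃ₗ[k] M) (e' : N ≃ₗ[k] N)
    (h : ∀ x, f (e x) = e' (f x)) : ∀ x, f (e⁻¹ x) = e'⁻¹ (f x) := by
  intro x
  have he : e (e⁻¹ x) = x := e.apply_symm_apply x
  have h2 := h (e⁻¹ x)
  rw [he] at h2
  rw [h2]
  exact (e'.symm_apply_apply _).symm

theorem aux_comm_inv_pow (f : M →ₗ[k] N) (e : M ≃ₗ[k] M) (e' : N ≃ₗ[k] N)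
    (h : ∀ x, f (e x) = e' (f x)) :
    ∀ (n : ℕ) (x : M), f ((e⁻¹ ^ n) x) = (e'⁻¹ ^ n) (f x) :=
  aux_comm_pow f e⁻¹ e'⁻¹ (aux_comm_inv f e e' h)

theorem aux_commute_apply (a b : M ≃ₗ[k] M) (h : Commute a b) (x : M) : a (b x) = b (a x) :=
  congrArg (fun e : M ≃ₗ[k] M => e x) h

end AuxHelpers

theorem ParacyclicData.face_apply (P : ParacyclicData k C) (n j : ℕ) (x : C (n + 1)) :
    P.face n j x = (P.t n ^ j) (P.d n (((P.t (n + 1))⁻¹ ^ (j + 1)) x)) := rfl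

theorem ParacyclicData.deg_apply (P : ParacyclicData k C) (n j : ℕ) (x : C n) :
    P.deg n j x = (P.t (n + 1) ^ (j + 1)) (P.s n (((P.t n)⁻¹ ^ (j + 1)) x)) := rfl

section BiParacyclic

variable {D : ℕ → ℕ → Type} [∀ p q, AddCommGroup (D p q)] [∀ p q, Module k (D p q)]
variable (db : ∀ p q, D (p + 1) q →ₗ[k] D p q) (sb : ∀ p q, D p q →ₗ[k] D (p + 1) q)
variable (tb : ∀ p q, D p q ≃ₗ[k] D p q)
variable (dv : ∀ p q, D p (q + 1) →ₗ[k] D p q) (sv : ∀ p q, D p q →ₗ[k] D p (q + 1))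
variable (tv : ∀ p q, D p q ≃ₗ[k] D p q)

/-- The row data `(C_{•,q}, d̄, s̄, t̄)`. -/
def rowData (q : ℕ) : ParacyclicData k (fun p => D p q) where
  d := fun p => db p q
  s := fun p => sb p q
  t := fun p => tb p q

/-- The column data `(C_{p,•}, d, s, t)`. -/
def colData (p : ℕ) : ParacyclicData k (fun q => D p q) where
  d := fun q => dv p q
  s := fun q => sv p q
  t := fun q => tv p q

/-- The diagonal data `(C_{m,m}, d̄d, s̄s, t̄t)`. -/
def diagData : ParacyclicData k (fun m => D m m) where
  d := fun m => (db m m) ∘ₗ (dv (m + 1) m)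
  s := fun m => (sb m (m + 1)) ∘ₗ (sv m m)
  t := fun m => tb m m * tv m m


theorem rowData_t (q p : ℕ) : (rowData db sb tb q).t p = tb p q := rfl
theorem rowData_d (q p : ℕ) : (rowData db sb tb q).d p = db p q := rfl
theorem rowData_s (q p : ℕ) : (rowData db sb tb q).s p = sb p q := rfl
theorem colData_t (p q : ℕ) : (colData dv sv tv p).t q = tv p q := rfl
theorem colData_d (p q : ℕ) : (colData dv sv tv p).d q = dv p q := rfl
theorem colData_s (p q : ℕ) : (colData dv sv tv p).s q = sv p q := rfl
theorem diagData_t (m : ℕ) : (diagData db sb tb dv sv tv).t m = tb m m * tv m m := rfl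
theorem diagData_d (m : ℕ) :
    (diagData db sb tb dv sv tv).d m = (db m m) ∘ₗ (dv (m + 1) m) := rfl
theorem diagData_s (m : ℕ) :
    (diagData db sb tb dv sv tv).s m = (sb m (m + 1)) ∘ₗ (sv m m) := rfl

/-- The diagonal of a bi-paracyclic module is paracyclic, and if the
bi-paracyclic module is cylindrical (`t̄^{p+1} t^{q+1} = 1` on `C_{p,q}`), the
diagonal is a cyclic module (`(t̄t)^{m+1} = 1` on `C_{m,m}`). -/
theorem diagonal_of_biparacyclic
    (hrow : ∀ q, IsParacyclic (rowData db sb tb q))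
    (hcol : ∀ p, IsParacyclic (colData dv sv tv p))
    -- all horizontal operators commute with all vertical operators
    (hdd : ∀ p q, (db p q) ∘ₗ (dv (p + 1) q) = (dv p q) ∘ₗ (db p (q + 1)))
    (hds : ∀ p q, (db p (q + 1)) ∘ₗ (sv (p + 1) q) = (sv p q) ∘ₗ (db p q))
    (hdt : ∀ p q, (↑(tv p q) : D p q →ₗ[k] D p q) ∘ₗ (db p q) = (db p q) ∘ₗ ↑(tv (p + 1) q))
    (hsd : ∀ p q, (sb p q) ∘ₗ (dv p q) = (dv (p + 1) q) ∘ₗ (sb p (q + 1)))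
    (hss : ∀ p q, (sb p (q + 1)) ∘ₗ (sv p q) = (sv (p + 1) q) ∘ₗ (sb p q))
    (hst : ∀ p q, (↑(tv (p + 1) q) : D (p + 1) q →ₗ[k] D (p + 1) q) ∘ₗ (sb p q)
      = (sb p q) ∘ₗ ↑(tv p q))
    (htd : ∀ p q, (↑(tb p q) : D p q →ₗ[k] D p q) ∘ₗ (dv p q) = (dv p q) ∘ₗ ↑(tb p (q + 1)))
    (hts : ∀ p q, (↑(tb p (q + 1)) : D p (q + 1) →ₗ[k] D p (q + 1)) ∘ₗ (sv p q)
      = (sv p q) ∘ₗ ↑(tb p q))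
    (htt : ∀ p q, tb p q * tv p q = tv p q * tb p q) :
    IsParacyclic (diagData db sb tb dv sv tv)
    ∧ ((∀ p q, (tb p q) ^ (p + 1) * (tv p q) ^ (q + 1) = 1) →
        ∀ m, (tb m m * tv m m) ^ (m + 1) = 1) := by
  -- pointwise versions of the commutation hypotheses
  have pdt : ∀ p q (x : D (p + 1) q), tv p q (db p q x) = db p q (tv (p + 1) q x) :=
    fun p q x => LinearMap.congr_fun (hdt p q) x
  have pst : ∀ p q (x : D p q), tv (p + 1) q (sb p q x) = sb p q (tv p q x) :=
    fun p q x => LinearMap.congr_fun (hst p q) x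
  have ptd : ∀ p q (x : D p (q + 1)), tb p q (dv p q x) = dv p q (tb p (q + 1) x) :=
    fun p q x => LinearMap.congr_fun (htd p q) x
  have pts : ∀ p q (x : D p q), tb p (q + 1) (sv p q x) = sv p q (tb p q x) :=
    fun p q x => LinearMap.congr_fun (hts p q) x
  have pdd : ∀ p q (x : D (p + 1) (q + 1)), db p q (dv (p + 1) q x) = dv p q (db p (q + 1) x) :=
    fun p q x => LinearMap.congr_fun (hdd p q) x
  have psd : ∀ p q (x : D p (q + 1)), sb p q (dv p q x) = dv (p + 1) q (sb p (q + 1) x) :=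
    fun p q x => LinearMap.congr_fun (hsd p q) x
  have pds : ∀ p q (x : D (p + 1) q), db p (q + 1) (sv (p + 1) q x) = sv p q (db p q x) :=
    fun p q x => LinearMap.congr_fun (hds p q) x
  have pss : ∀ p q (x : D p q), sb p (q + 1) (sv p q x) = sv (p + 1) q (sb p q x) :=
    fun p q x => LinearMap.congr_fun (hss p q) x
  have cbv : ∀ p q, Commute (tb p q) (tv p q) := fun p q => htt p q
  -- rewrite rules moving horizontal operators outside vertical ones
  have Rtvdb : ∀ p q (n : ℕ) (x : D (p + 1) q),
      (tv p q ^ n) (db p q x) = db p q ((tv (p + 1) q ^ n) x) :=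
    fun p q n x =>
      (aux_comm_pow (db p q) (tv (p + 1) q) (tv p q) (fun y => (pdt p q y).symm) n x).symm
  have Rtvidb : ∀ p q (n : ℕ) (x : D (p + 1) q),
      ((tv p q)⁻¹ ^ n) (db p q x) = db p q (((tv (p + 1) q)⁻¹ ^ n) x) :=
    fun p q n x =>
      (aux_comm_inv_pow (db p q) (tv (p + 1) q) (tv p q) (fun y => (pdt p q y).symm) n x).symm
  have Rtvsb : ∀ p q (n : ℕ) (x : D p q),
      (tv (p + 1) q ^ n) (sb p q x) = sb p q ((tv p q ^ n) x) :=
    fun p q n x =>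
      (aux_comm_pow (sb p q) (tv p q) (tv (p + 1) q) (fun y => (pst p q y).symm) n x).symm
  have Rtvisb : ∀ p q (n : ℕ) (x : D p q),
      ((tv (p + 1) q)⁻¹ ^ n) (sb p q x) = sb p q (((tv p q)⁻¹ ^ n) x) :=
    fun p q n x =>
      (aux_comm_inv_pow (sb p q) (tv p q) (tv (p + 1) q) (fun y => (pst p q y).symm) n x).symm
  have Rdvtb : ∀ p q (n : ℕ) (x : D p (q + 1)),
      dv p q ((tb p (q + 1) ^ n) x) = (tb p q ^ n) (dv p q x) :=
    fun p q n x =>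
      aux_comm_pow (dv p q) (tb p (q + 1)) (tb p q) (fun y => (ptd p q y).symm) n x
  have Rdvitb : ∀ p q (n : ℕ) (x : D p (q + 1)),
      dv p q (((tb p (q + 1))⁻¹ ^ n) x) = ((tb p q)⁻¹ ^ n) (dv p q x) :=
    fun p q n x =>
      aux_comm_inv_pow (dv p q) (tb p (q + 1)) (tb p q) (fun y => (ptd p q y).symm) n x
  have Rsvtb : ∀ p q (n : ℕ) (x : D p q),
      sv p q ((tb p q ^ n) x) = (tb p (q + 1) ^ n) (sv p q x) :=
    fun p q n x =>
      aux_comm_pow (sv p q) (tb p q) (tb p (q + 1)) (fun y => (pts p q y).symm) n x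
  have Rsvitb : ∀ p q (n : ℕ) (x : D p q),
      sv p q (((tb p q)⁻¹ ^ n) x) = ((tb p (q + 1))⁻¹ ^ n) (sv p q x) :=
    fun p q n x =>
      aux_comm_inv_pow (sv p q) (tb p q) (tb p (q + 1)) (fun y => (pts p q y).symm) n x
  have Rtvtb : ∀ p q (m n : ℕ) (x : D p q),
      (tv p q ^ m) ((tb p q ^ n) x) = (tb p q ^ n) ((tv p q ^ m) x) :=
    fun p q m n x => aux_commute_apply _ _ (((cbv p q).symm).pow_pow m n) x
  have Rtvtbi : ∀ p q (m n : ℕ) (x : D p q),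
      (tv p q ^ m) (((tb p q)⁻¹ ^ n) x) = ((tb p q)⁻¹ ^ n) ((tv p q ^ m) x) :=
    fun p q m n x => aux_commute_apply _ _ (((cbv p q).symm.inv_right).pow_pow m n) x
  have Rtvitb : ∀ p q (m n : ℕ) (x : D p q),
      ((tv p q)⁻¹ ^ m) ((tb p q ^ n) x) = (tb p q ^ n) (((tv p q)⁻¹ ^ m) x) :=
    fun p q m n x => aux_commute_apply _ _ (((cbv p q).symm.inv_left).pow_pow m n) x
  have Rtvitbi : ∀ p q (m n : ℕ) (x : D p q),
      ((tv p q)⁻¹ ^ m) (((tb p q)⁻¹ ^ n) x) = ((tb p q)⁻¹ ^ n) (((tv p q)⁻¹ ^ m) x) :=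
    fun p q m n x => aux_commute_apply _ _ (((cbv p q).symm.inv_left.inv_right).pow_pow m n) x
  have Rdvdb : ∀ p q (x : D (p + 1) (q + 1)),
      dv p q (db p (q + 1) x) = db p q (dv (p + 1) q x) := fun p q x => (pdd p q x).symm
  have Rdvsb : ∀ p q (x : D p (q + 1)),
      dv (p + 1) q (sb p (q + 1) x) = sb p q (dv p q x) := fun p q x => (psd p q x).symm
  have Rsvdb : ∀ p q (x : D (p + 1) q),
      sv p q (db p q x) = db p (q + 1) (sv (p + 1) q x) := fun p q x => (pds p q x).symm
  have Rsvsb : ∀ p q (x : D p q),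
      sv (p + 1) q (sb p q x) = sb p (q + 1) (sv p q x) := fun p q x => (pss p q x).symm
  have Rmul : ∀ p q (n : ℕ) (x : D p q),
      ((tb p q * tv p q) ^ n) x = (tb p q ^ n) ((tv p q ^ n) x) := by
    intro p q n x
    rw [(cbv p q).mul_pow]
    rfl
  have Rmuli : ∀ p q (n : ℕ) (x : D p q),
      ((tb p q * tv p q)⁻¹ ^ n) x = ((tb p q)⁻¹ ^ n) (((tv p q)⁻¹ ^ n) x) := by
    intro p q n x
    rw [mul_inv_rev, ((cbv p q).inv_inv.symm).eq, ((cbv p q).inv_inv).mul_pow]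
    rfl
  -- cross-commutation of conjugated operators
  have xff : ∀ p q i j (x : D (p + 1) (q + 1)),
      (colData dv sv tv p).face q i ((rowData db sb tb (q + 1)).face p j x)
        = (rowData db sb tb q).face p j ((colData dv sv tv (p + 1)).face q i x) := by
    intro p q i j x
    simp only [ParacyclicData.face_apply, rowData_t, rowData_d, colData_t, colData_d,
      Rtvdb, Rtvidb, Rdvtb, Rdvitb, Rtvtb, Rtvtbi, Rtvitb, Rtvitbi, Rdvdb]
  have xfd : ∀ p q i j (x : D p (q + 1)),
      (colData dv sv tv (p + 1)).face q i ((rowData db sb tb (q + 1)).deg p j x)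
        = (rowData db sb tb q).deg p j ((colData dv sv tv p).face q i x) := by
    intro p q i j x
    simp only [ParacyclicData.face_apply, ParacyclicData.deg_apply, rowData_t, rowData_s,
      colData_t, colData_d, Rtvsb, Rtvisb, Rdvtb, Rdvitb, Rtvtb, Rtvtbi, Rtvitb, Rtvitbi, Rdvsb]
  have xdf : ∀ p q i j (x : D (p + 1) q),
      (colData dv sv tv p).deg q i ((rowData db sb tb q).face p j x)
        = (rowData db sb tb (q + 1)).face p j ((colData dv sv tv (p + 1)).deg q i x) := by
    intro p q i j x
    simp only [ParacyclicData.face_apply, ParacyclicData.deg_apply, rowData_t, rowData_d,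
      colData_t, colData_s, Rtvdb, Rtvidb, Rsvtb, Rsvitb, Rtvtb, Rtvtbi, Rtvitb, Rtvitbi, Rsvdb]
  have xdd : ∀ p q i j (x : D p q),
      (colData dv sv tv (p + 1)).deg q i ((rowData db sb tb q).deg p j x)
        = (rowData db sb tb (q + 1)).deg p j ((colData dv sv tv p).deg q i x) := by
    intro p q i j x
    simp only [ParacyclicData.deg_apply, rowData_t, rowData_s, colData_t, colData_s,
      Rtvsb, Rtvisb, Rsvtb, Rsvitb, Rtvtb, Rtvtbi, Rtvitb, Rtvitbi, Rsvsb]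
  -- the diagonal face/degeneracy maps split
  have l1 : ∀ m j (x : D (m + 1) (m + 1)),
      (diagData db sb tb dv sv tv).face m j x
        = (rowData db sb tb m).face m j ((colData dv sv tv (m + 1)).face m j x) := by
    intro m j x
    simp only [ParacyclicData.face_apply, diagData_t, diagData_d, rowData_t, rowData_d,
      colData_t, colData_d, LinearMap.comp_apply, Rmul, Rmuli,
      Rtvdb, Rtvidb, Rdvtb, Rdvitb, Rtvtb, Rtvtbi, Rtvitb, Rtvitbi, Rdvdb]
  have l2 : ∀ m j (x : D m m),
      (diagData db sb tb dv sv tv).deg m j x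
        = (rowData db sb tb (m + 1)).deg m j ((colData dv sv tv m).deg m j x) := by
    intro m j x
    simp only [ParacyclicData.deg_apply, diagData_t, diagData_s, rowData_t, rowData_s,
      colData_t, colData_s, LinearMap.comp_apply, Rmul, Rmuli,
      Rtvsb, Rtvisb, Rsvtb, Rsvitb, Rtvtb, Rtvtbi, Rtvitb, Rtvitbi, Rsvsb]
  -- pointwise row/column axioms
  have rowFF : ∀ q n i j, i < j → j ≤ n + 2 → ∀ y,
      (rowData db sb tb q).face n i ((rowData db sb tb q).face (n + 1) j y)
        = (rowData db sb tb q).face n (j - 1) ((rowData db sb tb q).face (n + 1) i y) :=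
    fun q n i j hij hj y => by
      simpa only [LinearMap.comp_apply] using
        LinearMap.congr_fun ((hrow q).face_face n i j hij hj) y
  have colFF : ∀ p n i j, i < j → j ≤ n + 2 → ∀ y,
      (colData dv sv tv p).face n i ((colData dv sv tv p).face (n + 1) j y)
        = (colData dv sv tv p).face n (j - 1) ((colData dv sv tv p).face (n + 1) i y) :=
    fun p n i j hij hj y => by
      simpa only [LinearMap.comp_apply] using
        LinearMap.congr_fun ((hcol p).face_face n i j hij hj) y
  have rowDD : ∀ q n i j, i ≤ j → j ≤ n → ∀ y,
      (rowData db sb tb q).deg (n + 1) i ((rowData db sb tb q).deg n j y)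
        = (rowData db sb tb q).deg (n + 1) (j + 1) ((rowData db sb tb q).deg n i y) :=
    fun q n i j hij hj y => by
      simpa only [LinearMap.comp_apply] using
        LinearMap.congr_fun ((hrow q).deg_deg n i j hij hj) y
  have colDD : ∀ p n i j, i ≤ j → j ≤ n → ∀ y,
      (colData dv sv tv p).deg (n + 1) i ((colData dv sv tv p).deg n j y)
        = (colData dv sv tv p).deg (n + 1) (j + 1) ((colData dv sv tv p).deg n i y) :=
    fun p n i j hij hj y => by
      simpa only [LinearMap.comp_apply] using
        LinearMap.congr_fun ((hcol p).deg_deg n i j hij hj) y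
  have rowFDlt : ∀ q n i j, i < j → j ≤ n + 1 → ∀ y,
      (rowData db sb tb q).face (n + 1) i ((rowData db sb tb q).deg (n + 1) j y)
        = (rowData db sb tb q).deg n (j - 1) ((rowData db sb tb q).face n i y) :=
    fun q n i j hij hj y => by
      simpa only [LinearMap.comp_apply] using
        LinearMap.congr_fun ((hrow q).face_deg_lt n i j hij hj) y
  have colFDlt : ∀ p n i j, i < j → j ≤ n + 1 → ∀ y,
      (colData dv sv tv p).face (n + 1) i ((colData dv sv tv p).deg (n + 1) j y)
        = (colData dv sv tv p).deg n (j - 1) ((colData dv sv tv p).face n i y) :=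
    fun p n i j hij hj y => by
      simpa only [LinearMap.comp_apply] using
        LinearMap.congr_fun ((hcol p).face_deg_lt n i j hij hj) y
  have rowFDeq1 : ∀ q n j, j ≤ n → ∀ y,
      (rowData db sb tb q).face n j ((rowData db sb tb q).deg n j y) = y :=
    fun q n j hj y => by
      simpa only [LinearMap.comp_apply, LinearMap.id_apply] using
        LinearMap.congr_fun ((hrow q).face_deg_eq n j hj).1 y
  have rowFDeq2 : ∀ q n j, j ≤ n → ∀ y,
      (rowData db sb tb q).face n (j + 1) ((rowData db sb tb q).deg n j y) = y :=
    fun q n j hj y => by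
      simpa only [LinearMap.comp_apply, LinearMap.id_apply] using
        LinearMap.congr_fun ((hrow q).face_deg_eq n j hj).2 y
  have colFDeq1 : ∀ p n j, j ≤ n → ∀ y,
      (colData dv sv tv p).face n j ((colData dv sv tv p).deg n j y) = y :=
    fun p n j hj y => by
      simpa only [LinearMap.comp_apply, LinearMap.id_apply] using
        LinearMap.congr_fun ((hcol p).face_deg_eq n j hj).1 y
  have colFDeq2 : ∀ p n j, j ≤ n → ∀ y,
      (colData dv sv tv p).face n (j + 1) ((colData dv sv tv p).deg n j y) = y :=
    fun p n j hj y => by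
      simpa only [LinearMap.comp_apply, LinearMap.id_apply] using
        LinearMap.congr_fun ((hcol p).face_deg_eq n j hj).2 y
  have rowFDgt : ∀ q n i j, j + 1 < i → i ≤ n + 2 → ∀ y,
      (rowData db sb tb q).face (n + 1) i ((rowData db sb tb q).deg (n + 1) j y)
        = (rowData db sb tb q).deg n j ((rowData db sb tb q).face n (i - 1) y) :=
    fun q n i j hij hj y => by
      simpa only [LinearMap.comp_apply] using
        LinearMap.congr_fun ((hrow q).face_deg_gt n i j hij hj) y
  have colFDgt : ∀ p n i j, j + 1 < i → i ≤ n + 2 → ∀ y,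
      (colData dv sv tv p).face (n + 1) i ((colData dv sv tv p).deg (n + 1) j y)
        = (colData dv sv tv p).deg n j ((colData dv sv tv p).face n (i - 1) y) :=
    fun p n i j hij hj y => by
      simpa only [LinearMap.comp_apply] using
        LinearMap.congr_fun ((hcol p).face_deg_gt n i j hij hj) y
  have rowT : ∀ q n (x : D n q), tb n q x = db n q (sb n q x) :=
    fun q n x => by
      exact LinearMap.congr_fun ((hrow q).t_eq n) x
  have colT : ∀ p n (x : D p n), tv p n x = dv p n (sv p n x) :=
    fun p n x => by
      exact LinearMap.congr_fun ((hcol p).t_eq n) x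
  refine ⟨⟨?_, ?_, ?_, ?_, ?_, ?_⟩, fun hcyl m => ?_⟩
  · -- t_eq
    intro m
    apply LinearMap.ext
    intro x
    simp only [diagData_t, diagData_d, diagData_s, LinearMap.comp_apply, LinearEquiv.coe_coe]
    rw [show dv (m + 1) m (sb m (m + 1) (sv m m x)) = sb m m (dv m m (sv m m x)) from
      (psd m m _).symm, ← colT, ← rowT]
    rfl
  · -- face_face
    intro n i j hij hj
    apply LinearMap.ext
    intro x
    simp only [LinearMap.comp_apply, l1, xff]
    rw [rowFF n n i j hij hj, colFF (n + 2) n i j hij hj]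
  · -- deg_deg
    intro n i j hij hj
    apply LinearMap.ext
    intro x
    simp only [LinearMap.comp_apply, l2, xdd]
    rw [rowDD (n + 2) n i j hij hj, colDD n n i j hij hj]
  · -- face_deg_lt
    intro n i j hij hj
    apply LinearMap.ext
    intro x
    simp only [LinearMap.comp_apply, l1, l2, xfd, xdf]
    rw [rowFDlt (n + 1) n i j hij hj, colFDlt (n + 1) n i j hij hj]
  · -- face_deg_eq
    intro n j hj
    constructor
    · apply LinearMap.ext
      intro x
      simp only [LinearMap.comp_apply, LinearMap.id_apply, l1, l2, xfd]
      rw [rowFDeq1 n n j hj, colFDeq1 n n j hj]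
    · apply LinearMap.ext
      intro x
      simp only [LinearMap.comp_apply, LinearMap.id_apply, l1, l2, xfd]
      rw [rowFDeq2 n n j hj, colFDeq2 n n j hj]
  · -- face_deg_gt
    intro n i j hij hj
    apply LinearMap.ext
    intro x
    simp only [LinearMap.comp_apply, l1, l2, xfd, xdf]
    rw [rowFDgt (n + 1) n i j hij hj, colFDgt (n + 1) n i j hij hj]
  · -- cylindrical implies cyclic
    rw [(cbv m m).mul_pow]
    exact hcyl m m


end BiParacyclic
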